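/- For every fixed ε > 0, the uncorrected instanton-side periodic Kramers prefactor converges as the interval length decreases to the critical value, to twice the corrected value at criticality: with L(m) = 4√(1+m)·K(m) and μ₀(m) = 1 − (2/(m+1))√(m² − m + 1), one has lim_{m → 0⁺} L(m) · (|μ₀(m)|/(2π)^{3/2}) · √( 2m(1−m)·sinh²(L(m)/√2) / ((1+m)^{5/2}·|K(m) − ((1+m)/(1−m))E(m)|) ) · ε^{−1/2} = 2·sinh(√2 π)/(√3 π) · ε^{−1/2}. -/

import Mathlib

open Real Filter Set

/-- The complete elliptic integral of the first kind,
`K(m) = ∫₀^{π/2} (1 − m sin²θ)^{−1/2} dθ`. -/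
noncomputable def ellipticK (m : ℝ) : ℝ :=
  ∫ θ in (0:ℝ)..(π / 2), (1 - m * Real.sin θ ^ 2) ^ (-(1 : ℝ) / 2)

/-- The complete elliptic integral of the second kind,
`E(m) = ∫₀^{π/2} √(1 − m sin²θ) dθ`. -/
noncomputable def ellipticE (m : ℝ) : ℝ :=
  ∫ θ in (0:ℝ)..(π / 2), Real.sqrt (1 - m * Real.sin θ ^ 2)

/-- The interval length of the periodic instanton with elliptic parameter `m`,
`L(m) = 4√(1+m)·K(m)`. -/
noncomputable def Lper (m : ℝ) : ℝ := 4 * Real.sqrt (1 + m) * ellipticK m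

lemma base_lb {m : ℝ} (hm0 : 0 ≤ m) (hm : m ≤ 1/2) (θ : ℝ) :
    (1:ℝ)/2 ≤ 1 - m * Real.sin θ ^ 2 := by
  nlinarith [Real.sin_sq_le_one θ, sq_nonneg (Real.sin θ)]

lemma rpow_neg_half {x : ℝ} (hx : 0 ≤ x) : x ^ (-(1:ℝ)/2) = (Real.sqrt x)⁻¹ := by
  rw [neg_div, Real.rpow_neg hx, ← Real.sqrt_eq_rpow]

lemma contK {m : ℝ} (hm0 : 0 ≤ m) (hm : m ≤ 1/2) :
    Continuous fun θ : ℝ => (1 - m * Real.sin θ ^ 2) ^ (-(1:ℝ)/2) := by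
  apply Continuous.rpow_const (by continuity)
  intro θ; left
  have := base_lb hm0 hm θ; linarith

lemma contE {m : ℝ} : Continuous fun θ : ℝ => Real.sqrt (1 - m * Real.sin θ ^ 2) := by
  continuity

lemma contI {m : ℝ} (hm0 : 0 ≤ m) (hm : m ≤ 1/2) :
    Continuous fun θ : ℝ => ((1+m) * Real.sin θ ^ 2 - 2) / Real.sqrt (1 - m * Real.sin θ ^ 2) := by
  apply Continuous.div (by continuity) contE
  intro θ
  have := base_lb hm0 hm θ
  positivity

noncomputable def Ifun (m : ℝ) : ℝ :=
  ∫ θ in (0:ℝ)..(π / 2), ((1+m) * Real.sin θ ^ 2 - 2) / Real.sqrt (1 - m * Real.sin θ ^ 2)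

lemma mem_filt : Ioo (0:ℝ) (1/2) ∈ nhdsWithin (0:ℝ) (Ioi 0) :=
  Ioo_mem_nhdsGT (by norm_num)

lemma sqrt_lb {m : ℝ} (hm0 : 0 ≤ m) (hm : m ≤ 1/2) (θ : ℝ) :
    Real.sqrt (1/2) ≤ Real.sqrt (1 - m * Real.sin θ ^ 2) :=
  Real.sqrt_le_sqrt (base_lb hm0 hm θ)

lemma tendstoK : Tendsto ellipticK (nhdsWithin (0:ℝ) (Ioi 0)) (nhds (π/2)) := by
  have h : (π/2 : ℝ) = ∫ θ in (0:ℝ)..(π/2), (1:ℝ) := by simp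
  rw [h]
  apply intervalIntegral.tendsto_integral_filter_of_dominated_convergence
      (bound := fun _ => Real.sqrt 2)
  · filter_upwards [mem_filt] with m hm
    exact (contK hm.1.le hm.2.le).aestronglyMeasurable
  · filter_upwards [mem_filt] with m hm
    refine Eventually.of_forall fun θ _ => ?_
    have h1 := base_lb hm.1.le hm.2.le θ
    rw [Real.norm_eq_abs, rpow_neg_half (by linarith), abs_of_nonneg (by positivity)]
    have h2 : (0:ℝ) < Real.sqrt (1/2) := by positivity
    calc (Real.sqrt (1 - m * Real.sin θ ^ 2))⁻¹ ≤ (Real.sqrt (1/2))⁻¹ :=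
          inv_anti₀ h2 (sqrt_lb hm.1.le hm.2.le θ)
      _ = Real.sqrt 2 := by
          rw [show (1:ℝ)/2 = 2⁻¹ by norm_num, Real.sqrt_inv, inv_inv]
  · exact intervalIntegrable_const
  · refine Eventually.of_forall fun θ _ => ?_
    have hc : ContinuousAt (fun m : ℝ => (1 - m * Real.sin θ ^ 2) ^ (-(1:ℝ)/2)) 0 := by
      apply ContinuousAt.rpow_const (by fun_prop)
      left; norm_num
    have := hc.tendsto
    simp only [zero_mul, sub_zero, Real.one_rpow] at this
    exact this.mono_left nhdsWithin_le_nhds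

lemma tendstoI : Tendsto Ifun (nhdsWithin (0:ℝ) (Ioi 0)) (nhds (-(3*π/4))) := by
  have h : (-(3*π/4) : ℝ) = ∫ θ in (0:ℝ)..(π/2), (Real.sin θ ^ 2 - 2) := by
    rw [intervalIntegral.integral_sub]
    · rw [integral_sin_sq]
      simp
      ring
    · exact (Continuous.intervalIntegrable (by continuity) _ _)
    · exact intervalIntegrable_const
  rw [h]
  apply intervalIntegral.tendsto_integral_filter_of_dominated_convergence
      (bound := fun _ => 2 * Real.sqrt 2)
  · filter_upwards [mem_filt] with m hm
    exact (contI hm.1.le hm.2.le).aestronglyMeasurable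
  · filter_upwards [mem_filt] with m hm
    refine Eventually.of_forall fun θ _ => ?_
    have h1 := base_lb hm.1.le hm.2.le θ
    have hs := Real.sin_sq_le_one θ
    have hs0 := sq_nonneg (Real.sin θ)
    rw [Real.norm_eq_abs, abs_div]
    have hnum : |(1+m) * Real.sin θ ^ 2 - 2| ≤ 2 := by
      rw [abs_le]; constructor <;> nlinarith [hm.1.le, hm.2.le]
    have hden : Real.sqrt (1/2) ≤ |Real.sqrt (1 - m * Real.sin θ ^ 2)| := by
      rw [abs_of_nonneg (Real.sqrt_nonneg _)]; exact sqrt_lb hm.1.le hm.2.le θ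
    have h2 : (0:ℝ) < Real.sqrt (1/2) := by positivity
    calc |(1+m) * Real.sin θ ^ 2 - 2| / |Real.sqrt (1 - m * Real.sin θ ^ 2)|
        ≤ 2 / Real.sqrt (1/2) := by
          exact div_le_div₀ (by norm_num) hnum h2 hden
      _ = 2 * Real.sqrt 2 := by
          rw [show (1:ℝ)/2 = 2⁻¹ by norm_num, Real.sqrt_inv]
          field_simp
  · exact intervalIntegrable_const
  · refine Eventually.of_forall fun θ _ => ?_
    have hc : ContinuousAt (fun m : ℝ =>
        ((1+m) * Real.sin θ ^ 2 - 2) / Real.sqrt (1 - m * Real.sin θ ^ 2)) 0 := by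
      apply ContinuousAt.div (by fun_prop) (by fun_prop)
      norm_num
    have := hc.tendsto
    simp only [zero_mul, sub_zero, Real.sqrt_one, zero_add, one_mul, div_one, add_zero] at this
    exact this.mono_left nhdsWithin_le_nhds

lemma key_id {m : ℝ} (hm : m ∈ Ioo (0:ℝ) (1/2)) :
    ellipticK m - ((1+m)/(1-m)) * ellipticE m = m/(1-m) * Ifun m := by
  rw [ellipticK, ellipticE, Ifun, ← intervalIntegral.integral_const_mul,
      ← intervalIntegral.integral_const_mul,
      ← intervalIntegral.integral_sub ((contK hm.1.le hm.2.le).intervalIntegrable _ _)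
        ((show Continuous fun θ : ℝ => (1+m)/(1-m) * Real.sqrt (1 - m * Real.sin θ ^ 2) from
          continuous_const.mul contE).intervalIntegrable _ _)]
  apply intervalIntegral.integral_congr
  intro θ _
  have h1 := base_lb hm.1.le hm.2.le θ
  have hb : (0:ℝ) < 1 - m * Real.sin θ ^ 2 := by linarith
  have hs : (0:ℝ) < Real.sqrt (1 - m * Real.sin θ ^ 2) := Real.sqrt_pos.mpr hb
  have hs2 : Real.sqrt (1 - m * Real.sin θ ^ 2) ^ 2 = 1 - m * Real.sin θ ^ 2 :=
    Real.sq_sqrt hb.le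
  have hm1 : (1:ℝ) - m ≠ 0 := by have := hm.2; norm_num; linarith
  simp only []
  rw [rpow_neg_half hb.le]
  field_simp
  linear_combination (-(1 + m)) * hs2

lemma tendstoLper : Tendsto Lper (nhdsWithin (0:ℝ) (Ioi 0)) (nhds (2*π)) := by
  have h1 : Tendsto (fun m : ℝ => 4 * Real.sqrt (1 + m)) (nhdsWithin (0:ℝ) (Ioi 0)) (nhds 4) := by
    have hc : ContinuousAt (fun m : ℝ => 4 * Real.sqrt (1 + m)) 0 := by fun_prop
    have := hc.tendsto
    norm_num at this
    exact this.mono_left nhdsWithin_le_nhds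
  have := h1.mul tendstoK
  norm_num at this
  convert this using 2 <;> (try simp only [Lper]) <;> ring

/-- For every fixed `ε > 0`, the uncorrected instanton-side periodic
Kramers prefactor converges as the interval length decreases to the critical value, to
twice the corrected value at criticality: with `L(m) = 4√(1+m)·K(m)` and
`μ₀(m) = 1 − (2/(m+1))√(m² − m + 1)`, one has
`lim_{m → 0⁺} L(m) · (|μ₀(m)|/(2π)^{3/2}) ·
    √( 2m(1−m)·sinh²(L(m)/√2) / ((1+m)^{5/2}·|K(m) − ((1+m)/(1−m))E(m)|) ) · ε^{−1/2}
  = 2·sinh(√2 π)/(√3 π) · ε^{−1/2}`. -/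
theorem stmt_19 (ε : ℝ) (hε : 0 < ε) :
    Tendsto (fun m : ℝ =>
        Lper m * (|1 - (2 / (m + 1)) * Real.sqrt (m ^ 2 - m + 1)| / (2 * π) ^ ((3 : ℝ) / 2)) *
          Real.sqrt (2 * m * (1 - m) * Real.sinh (Lper m / Real.sqrt 2) ^ 2 /
            ((1 + m) ^ ((5 : ℝ) / 2) *
              |ellipticK m - ((1 + m) / (1 - m)) * ellipticE m|)) *
          ε ^ (-(1 : ℝ) / 2))
      (nhdsWithin 0 (Ioi 0))
      (nhds (2 * Real.sinh (Real.sqrt 2 * π) / (Real.sqrt 3 * π) * ε ^ (-(1 : ℝ) / 2))) := by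
  -- eventual lower bound on |Ifun|
  have habsI : Tendsto (fun m => |Ifun m|) (nhdsWithin (0:ℝ) (Ioi 0)) (nhds (3*π/4)) := by
    have := tendstoI.abs
    rwa [abs_neg, abs_of_pos (by positivity)] at this
  have hIev : ∀ᶠ m in nhdsWithin (0:ℝ) (Ioi 0), 3*π/8 < |Ifun m| :=
    habsI.eventually (eventually_gt_nhds (by linarith [pi_pos]))
  -- the nicer function g
  set g : ℝ → ℝ := fun m =>
    Lper m * (|1 - (2 / (m + 1)) * Real.sqrt (m ^ 2 - m + 1)| / (2 * π) ^ ((3 : ℝ) / 2)) *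
      Real.sqrt (2 * (1 - m) ^ 2 * Real.sinh (Lper m / Real.sqrt 2) ^ 2 /
        ((1 + m) ^ ((5 : ℝ) / 2) * |Ifun m|)) * ε ^ (-(1 : ℝ) / 2) with hg
  have heq : ∀ᶠ m in nhdsWithin (0:ℝ) (Ioi 0),
      Lper m * (|1 - (2 / (m + 1)) * Real.sqrt (m ^ 2 - m + 1)| / (2 * π) ^ ((3 : ℝ) / 2)) *
        Real.sqrt (2 * m * (1 - m) * Real.sinh (Lper m / Real.sqrt 2) ^ 2 /
          ((1 + m) ^ ((5 : ℝ) / 2) *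
            |ellipticK m - ((1 + m) / (1 - m)) * ellipticE m|)) *
        ε ^ (-(1 : ℝ) / 2) = g m := by
    filter_upwards [mem_filt, hIev] with m hm hI
    have hm0 : 0 < m := hm.1
    have hm1 : 0 < 1 - m := by have := hm.2; linarith
    have hIpos : 0 < |Ifun m| := lt_trans (by positivity) hI
    have hP : 0 < (1 + m : ℝ) ^ ((5:ℝ)/2) := Real.rpow_pos_of_pos (by linarith) _
    have harg : 2 * m * (1 - m) * Real.sinh (Lper m / Real.sqrt 2) ^ 2 /
          ((1 + m) ^ ((5 : ℝ) / 2) *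
            |ellipticK m - ((1 + m) / (1 - m)) * ellipticE m|)
        = 2 * (1 - m) ^ 2 * Real.sinh (Lper m / Real.sqrt 2) ^ 2 /
          ((1 + m) ^ ((5 : ℝ) / 2) * |Ifun m|) := by
      rw [key_id hm, abs_mul, abs_of_pos (div_pos hm0 hm1)]
      field_simp
    rw [harg]
  apply Tendsto.congr' (EventuallyEq.symm heq)
  -- limit of g
  have hB : Tendsto (fun m : ℝ =>
      |1 - (2 / (m + 1)) * Real.sqrt (m ^ 2 - m + 1)| / (2 * π) ^ ((3 : ℝ) / 2))
      (nhdsWithin (0:ℝ) (Ioi 0)) (nhds (1 / (2 * π) ^ ((3 : ℝ) / 2))) := by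
    have hc : ContinuousAt (fun m : ℝ =>
        |1 - (2 / (m + 1)) * Real.sqrt (m ^ 2 - m + 1)| / (2 * π) ^ ((3 : ℝ) / 2)) 0 := by
      apply ContinuousAt.div _ continuousAt_const
      · positivity
      · apply ContinuousAt.abs
        apply ContinuousAt.sub continuousAt_const
        apply ContinuousAt.mul
        · exact continuousAt_const.div (by fun_prop) (by norm_num)
        · fun_prop
    have := hc.tendsto
    norm_num at this
    rw [one_div]
    exact this.mono_left nhdsWithin_le_nhds
  have hsinh : Tendsto (fun m : ℝ => Real.sinh (Lper m / Real.sqrt 2) ^ 2)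
      (nhdsWithin (0:ℝ) (Ioi 0)) (nhds (Real.sinh (Real.sqrt 2 * π) ^ 2)) := by
    have h1 : Tendsto (fun m : ℝ => Lper m / Real.sqrt 2) (nhdsWithin (0:ℝ) (Ioi 0))
        (nhds (Real.sqrt 2 * π)) := by
      have h2 : (2*π) / Real.sqrt 2 = Real.sqrt 2 * π := by
        rw [eq_comm, mul_comm, eq_div_iff (by positivity)]
        rw [mul_assoc, Real.mul_self_sqrt (by norm_num)]
        ring
      rw [← h2]
      exact tendstoLper.div_const _
    exact ((Real.continuous_sinh.continuousAt).tendsto.comp h1).pow 2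
  have hpow : Tendsto (fun m : ℝ => (1 + m) ^ ((5:ℝ)/2)) (nhdsWithin (0:ℝ) (Ioi 0)) (nhds 1) := by
    have hc : ContinuousAt (fun m : ℝ => (1 + m) ^ ((5:ℝ)/2)) 0 := by
      apply ContinuousAt.rpow_const (by fun_prop)
      left; norm_num
    have := hc.tendsto
    norm_num at this
    exact this.mono_left nhdsWithin_le_nhds
  have hsq1 : Tendsto (fun m : ℝ => 2 * (1 - m) ^ 2) (nhdsWithin (0:ℝ) (Ioi 0)) (nhds 2) := by
    have hc : ContinuousAt (fun m : ℝ => 2 * (1 - m) ^ 2) 0 := by fun_prop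
    have := hc.tendsto
    norm_num at this
    exact this.mono_left nhdsWithin_le_nhds
  have hQ : Tendsto (fun m : ℝ => 2 * (1 - m) ^ 2 * Real.sinh (Lper m / Real.sqrt 2) ^ 2 /
      ((1 + m) ^ ((5 : ℝ) / 2) * |Ifun m|)) (nhdsWithin (0:ℝ) (Ioi 0))
      (nhds (2 * Real.sinh (Real.sqrt 2 * π) ^ 2 / (3 * π / 4))) := by
    have := (hsq1.mul hsinh).div (hpow.mul habsI) (by positivity)
    rw [one_mul] at this; exact this
  have hC : Tendsto (fun m : ℝ => Real.sqrt (2 * (1 - m) ^ 2 * Real.sinh (Lper m / Real.sqrt 2) ^ 2 /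
      ((1 + m) ^ ((5 : ℝ) / 2) * |Ifun m|))) (nhdsWithin (0:ℝ) (Ioi 0))
      (nhds (Real.sqrt (2 * Real.sinh (Real.sqrt 2 * π) ^ 2 / (3 * π / 4)))) :=
    (Real.continuous_sqrt.continuousAt.tendsto).comp hQ
  have hprod := ((tendstoLper.mul hB).mul hC).mul_const (ε ^ (-(1 : ℝ) / 2))
  convert hprod using 2
  -- value identity
  have hS : 0 < Real.sinh (Real.sqrt 2 * π) := Real.sinh_pos_iff.mpr (by positivity)
  have hval : 2 * π * (1 / (2 * π) ^ ((3 : ℝ) / 2)) *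
      Real.sqrt (2 * Real.sinh (Real.sqrt 2 * π) ^ 2 / (3 * π / 4))
      = 2 * Real.sinh (Real.sqrt 2 * π) / (Real.sqrt 3 * π) := by
    have h2pi : (0:ℝ) < 2 * π := by positivity
    have hr : ((2 * π) ^ ((3 : ℝ) / 2)) = (2*π) * Real.sqrt (2*π) := by
      rw [show ((3:ℝ)/2) = 1 + 1/2 by norm_num, Real.rpow_add h2pi, Real.rpow_one,
        Real.sqrt_eq_rpow]
    have hsq : Real.sqrt (2 * Real.sinh (Real.sqrt 2 * π) ^ 2 / (3 * π / 4))
        = Real.sinh (Real.sqrt 2 * π) * Real.sqrt (8 / (3 * π)) := by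
      rw [show 2 * Real.sinh (Real.sqrt 2 * π) ^ 2 / (3 * π / 4)
          = Real.sinh (Real.sqrt 2 * π) ^ 2 * (8 / (3 * π)) by field_simp; ring,
        Real.sqrt_mul (by positivity), Real.sqrt_sq hS.le]
    rw [hr, hsq]
    rw [eq_div_iff (by positivity)]
    have e1 : Real.sqrt (2*π) ≠ 0 := by positivity
    field_simp
    have h8 : Real.sqrt 8 = 2 * Real.sqrt 2 := by
      rw [show (8:ℝ) = 2^2 * 2 by norm_num, Real.sqrt_mul (by positivity),
        Real.sqrt_sq (by norm_num)]
    have hpp : Real.sqrt π * Real.sqrt π = π := Real.mul_self_sqrt pi_pos.le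
    have hA : (π * Real.sqrt (8 / (π * 3)) * Real.sqrt 3) ^ 2 = (2 * Real.sqrt (2 * π)) ^ 2 := by
      rw [mul_pow, mul_pow, mul_pow, Real.sq_sqrt (by positivity), Real.sq_sqrt (by positivity),
        Real.sq_sqrt (by positivity)]
      field_simp
      ring
    exact (sq_eq_sq₀ (by positivity) (by positivity)).mp hA
  rw [← hval]
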